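/- Let u,v be non-adjacent vertices in a finite graph and let s equal the minimum number of edges of any u-v path (the hop-distance). Then κ_s(u,v) = μ_s(u,v): the minimum number of vertices whose deletion destroys all u-v paths of at most s edges equals the maximum number of internally vertex-disjoint u-v paths with at most s edges each. -/

import Mathlib

open List

namespace MengerAux

set_option linter.unusedSectionVars false

variable {V : Type*} [DecidableEq V] [Fintype V]

/-- A walk (possibly with repeated vertices) in digraph `D` from set `A` to set `B`. -/
structure Trail (D : Finset (V × V)) (A B : Finset V) (l : List V) : Prop where
  ne : l ≠ []
  chain : l.Chain' (fun x y => (x, y) ∈ D)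
  ha : ∀ a, l.head? = some a → a ∈ A
  hb : ∀ b, l.getLast? = some b → b ∈ B

def Sep (D : Finset (V × V)) (A B S : Finset V) : Prop :=
  ∀ l, Trail D A B l → ∃ z ∈ l, z ∈ S

lemma exists_first_hit {S : Finset V} : ∀ {l : List V}, (∃ z ∈ l, z ∈ S) →
    ∃ p z q, l = p ++ z :: q ∧ z ∈ S ∧ ∀ w ∈ p, w ∉ S := by
  intro l h
  induction l with
  | nil => simp at h
  | cons a t ih =>
    by_cases ha : a ∈ S
    · exact ⟨[], a, t, rfl, ha, by simp⟩
    · have ht : ∃ z ∈ t, z ∈ S := by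
        obtain ⟨z, hz, hzS⟩ := h
        rcases List.mem_cons.1 hz with rfl | hz
        · exact absurd hzS ha
        · exact ⟨z, hz, hzS⟩
      obtain ⟨p, z, q, rfl, hz, hp⟩ := ih ht
      refine ⟨a :: p, z, q, rfl, hz, ?_⟩
      intro w hw
      rcases List.mem_cons.1 hw with rfl | hw
      · exact ha
      · exact hp w hw

lemma exists_last_hit {S : Finset V} : ∀ {l : List V}, (∃ z ∈ l, z ∈ S) →
    ∃ p z q, l = p ++ z :: q ∧ z ∈ S ∧ ∀ w ∈ q, w ∉ S := by
  intro l h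
  induction l with
  | nil => simp at h
  | cons a t ih =>
    by_cases ht : ∃ z ∈ t, z ∈ S
    · obtain ⟨p, z, q, rfl, hz, hq⟩ := ih ht
      exact ⟨a :: p, z, q, rfl, hz, hq⟩
    · have ha : a ∈ S := by
        obtain ⟨z, hz, hzS⟩ := h
        rcases List.mem_cons.1 hz with rfl | hz
        · exact hzS
        · exact absurd ⟨z, hz, hzS⟩ ht
      exact ⟨[], a, t, rfl, ha, fun w hw hwS => ht ⟨w, hw, hwS⟩⟩

/-- If a chain for `R` is not a chain for `R'`, where `R'` only misses the pair `(x,y)`,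
then the list splits at a first use of the edge `(x,y)`. -/
lemma exists_split_edge {R R' : V → V → Prop} {x y : V}
    (hR' : ∀ a b, R a b → ¬(a = x ∧ b = y) → R' a b) :
    ∀ {l : List V}, Chain' R l → ¬ Chain' R' l →
    ∃ p q, l = p ++ x :: y :: q ∧ Chain' R' (p ++ [x]) := by
  intro l hR hnR
  induction l with
  | nil => exact absurd List.isChain_nil hnR
  | cons a t ih =>
    match t, hR, hnR with
    | [], _, hnR => exact absurd (List.isChain_singleton a) hnR
    | b :: t, hR, hnR =>
      by_cases he : a = x ∧ b = y
      · obtain ⟨rfl, rfl⟩ := he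
        exact ⟨[], t, rfl, List.isChain_singleton a⟩
      · have hab : R' a b := hR' a b (List.isChain_cons_cons.1 hR).1 he
        have hnb : ¬ Chain' R' (b :: t) := fun hc =>
          hnR (List.isChain_cons_cons.2 ⟨hab, hc⟩)
        obtain ⟨p, q, heq, hchain⟩ := ih (List.isChain_cons_cons.1 hR).2 hnb
        refine ⟨a :: p, q, by rw [heq]; rfl, ?_⟩
        have hhead : (p ++ [x]).head? = some b := by
          have : (p ++ [x]) ++ (y :: q) = b :: t := by
            simpa using heq.symm
          have h1 : ((p ++ [x]) ++ (y :: q)).head? = some b := by rw [this]; rfl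
          rwa [List.head?_append_of_ne_nil _ (by simp)] at h1
        refine List.isChain_cons.2 ⟨?_, hchain⟩
        intro c hc
        simp only [List.append_eq] at hc
        rw [hhead] at hc
        cases hc
        exact hab

/-- Last-use variant. -/
lemma exists_split_edge' {R R' : V → V → Prop} {x y : V}
    (hR' : ∀ a b, R a b → ¬(a = x ∧ b = y) → R' a b) :
    ∀ {l : List V}, Chain' R l → ¬ Chain' R' l →
    ∃ p q, l = p ++ x :: y :: q ∧ Chain' R' (y :: q) := by
  intro l hR hnR
  induction l with
  | nil => exact absurd List.isChain_nil hnR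
  | cons a t ih =>
    match t, hR, hnR with
    | [], _, hnR => exact absurd (List.isChain_singleton a) hnR
    | b :: t, hR, hnR =>
      by_cases hnb : Chain' R' (b :: t)
      · have he : a = x ∧ b = y := by
          by_contra hc
          exact hnR (List.isChain_cons_cons.2 ⟨hR' a b (List.isChain_cons_cons.1 hR).1 hc, hnb⟩)
        obtain ⟨rfl, rfl⟩ := he
        exact ⟨[], t, rfl, hnb⟩
      · obtain ⟨p, q, heq, hchain⟩ := ih (List.isChain_cons_cons.1 hR).2 hnb
        exact ⟨a :: p, q, by rw [heq]; rfl, hchain⟩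

lemma trail_sub {D D' : Finset (V × V)} (hDD : D ⊆ D') {A B : Finset V} {l : List V}
    (h : Trail D A B l) : Trail D' A B l :=
  ⟨h.ne, h.chain.imp (fun _ _ hab => hDD hab), h.ha, h.hb⟩

lemma menger_empty (A B : Finset V) (k : ℕ)
    (hk : ∀ S, Sep (∅ : Finset (V × V)) A B S → k ≤ S.card) :
    ∃ W : Fin k → List V, (∀ i, Trail (∅ : Finset (V × V)) A B (W i)) ∧
      ∀ i j, i ≠ j → ∀ z ∈ W i, z ∉ W j := by
  have hsingle : ∀ l, Trail (∅ : Finset (V × V)) A B l → ∃ z, l = [z] ∧ z ∈ A ∧ z ∈ B := by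
    intro l hl
    match l, hl with
    | [], hl => exact absurd rfl hl.ne
    | [a], hl => exact ⟨a, rfl, hl.ha a rfl, hl.hb a rfl⟩
    | a :: b :: t, hl => exact absurd (List.isChain_cons_cons.1 hl.chain).1 (by simp)
  have hsep : Sep (∅ : Finset (V × V)) A B (A ∩ B) := by
    intro l hl
    obtain ⟨z, rfl, hza, hzb⟩ := hsingle l hl
    exact ⟨z, by simp, Finset.mem_inter.2 ⟨hza, hzb⟩⟩
  have hkle : k ≤ (A ∩ B).toList.length := by
    rw [Finset.length_toList]; exact hk _ hsep
  refine ⟨fun i => [(A ∩ B).toList.get ⟨i, lt_of_lt_of_le i.2 hkle⟩], ?_, ?_⟩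
  · intro i
    have hmem : (A ∩ B).toList.get ⟨i, lt_of_lt_of_le i.2 hkle⟩ ∈ A ∩ B := by
      rw [← Finset.mem_toList]; exact List.get_mem _ _
    exact ⟨by simp, List.isChain_singleton _,
      fun a ha => by cases ha; exact (Finset.mem_inter.1 hmem).1,
      fun b hb => by cases hb; exact (Finset.mem_inter.1 hmem).2⟩
  · intro i j hij z hzi hzj
    simp only [List.mem_singleton] at hzi hzj
    subst hzi
    have h1 := List.nodup_iff_injective_get.1 (Finset.nodup_toList (A ∩ B)) hzj.symm
    have h2 : (j : ℕ) = i := by simpa using congrArg Fin.val h1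
    exact hij (Fin.ext h2.symm)

theorem menger : ∀ (n : ℕ) (D : Finset (V × V)), D.card ≤ n → (∀ x : V, (x, x) ∉ D) →
    ∀ (A B : Finset V) (k : ℕ), (∀ S, Sep D A B S → k ≤ S.card) →
    ∃ W : Fin k → List V, (∀ i, Trail D A B (W i)) ∧
      ∀ i j, i ≠ j → ∀ z ∈ W i, z ∉ W j := by
  intro n
  induction n with
  | zero =>
    intro D hcard _ A B k hk
    have : D = ∅ := Finset.card_eq_zero.1 (Nat.le_zero.1 hcard)
    subst this
    exact menger_empty A B k hk
  | succ n ih =>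
    intro D hcard hloop A B k hk
    rcases D.eq_empty_or_nonempty with rfl | ⟨e, he⟩
    · exact menger_empty A B k hk
    obtain ⟨x, y⟩ := e
    have hxy : x ≠ y := fun h => hloop x (by rw [h] at he ⊢; exact he)
    set D' : Finset (V × V) := D.erase (x, y) with hD'
    have hDD : D' ⊆ D := Finset.erase_subset _ _
    have hcard' : D'.card ≤ n := by
      have h1 : D'.card = D.card - 1 := by rw [hD']; exact Finset.card_erase_of_mem he
      have h2 : 0 < D.card := Finset.card_pos.2 ⟨(x, y), he⟩
      omega
    have hloop' : ∀ z : V, (z, z) ∉ D' := fun z hz => hloop z (hDD hz)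
    have hmemD' : ∀ a b : V, (a, b) ∈ D → ¬(a = x ∧ b = y) → (a, b) ∈ D' := by
      intro a b hab hne
      exact Finset.mem_erase.2 ⟨by simp [Prod.ext_iff]; tauto, hab⟩
    by_cases hS : ∃ S, Sep D' A B S ∧ S.card < k
    · obtain ⟨S, sepS, hScard⟩ := hS
      -- S ∪ {x} and S ∪ {y} are separators in D
      have cutx : Sep D A B (insert x S) := by
        intro l tr
        by_cases hch : l.Chain' (fun a b => (a, b) ∈ D')
        · obtain ⟨z, hzl, hzS⟩ := sepS l ⟨tr.ne, hch, tr.ha, tr.hb⟩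
          exact ⟨z, hzl, Finset.mem_insert_of_mem hzS⟩
        · obtain ⟨p, q, heq, -⟩ := exists_split_edge hmemD' tr.chain hch
          exact ⟨x, by rw [heq]; simp, Finset.mem_insert_self x S⟩
      have cuty : Sep D A B (insert y S) := by
        intro l tr
        by_cases hch : l.Chain' (fun a b => (a, b) ∈ D')
        · obtain ⟨z, hzl, hzS⟩ := sepS l ⟨tr.ne, hch, tr.ha, tr.hb⟩
          exact ⟨z, hzl, Finset.mem_insert_of_mem hzS⟩
        · obtain ⟨p, q, heq, -⟩ := exists_split_edge' hmemD' tr.chain hch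
          exact ⟨y, by rw [heq]; simp, Finset.mem_insert_self y S⟩
      have hxS : x ∉ S := by
        intro hx
        have h1 := hk _ cutx
        rw [Finset.insert_eq_self.2 hx] at h1
        omega
      have hyS : y ∉ S := by
        intro hy
        have h1 := hk _ cuty
        rw [Finset.insert_eq_self.2 hy] at h1
        omega
      have hSx : (insert x S).card = k := by
        have h1 := hk _ cutx
        have h2 : (insert x S).card = S.card + 1 := Finset.card_insert_of_notMem hxS
        omega
      have hSy : (insert y S).card = k := by
        have h1 := hk _ cuty
        have h2 : (insert y S).card = S.card + 1 := Finset.card_insert_of_notMem hyS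
        omega
      -- every A-(S∪{x}) separator of D' is an A-B separator of D
      have T1 : ∀ T, Sep D' A (insert x S) T → k ≤ T.card := by
        intro T hT
        refine hk T ?_
        intro l tr
        by_cases hch : l.Chain' (fun a b => (a, b) ∈ D')
        · obtain ⟨z, hzl, hzS⟩ := sepS l ⟨tr.ne, hch, tr.ha, tr.hb⟩
          obtain ⟨p, z', q, rfl, hz', -⟩ := exists_first_hit ⟨z, hzl, hzS⟩
          have htr : Trail D' A (insert x S) (p ++ [z']) := by
            refine ⟨by simp, hch.prefix ⟨q, by simp⟩, ?_, ?_⟩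
            · intro a ha
              apply tr.ha
              rwa [← List.head?_append_of_ne_nil (p ++ [z']) (by simp), List.append_assoc] at ha
            · intro b hb
              rw [List.getLast?_concat] at hb
              cases hb
              exact Finset.mem_insert_of_mem hz'
          obtain ⟨w, hwl, hwT⟩ := hT _ htr
          refine ⟨w, ?_, hwT⟩
          rcases List.mem_append.1 hwl with h | h
          · exact List.mem_append_left _ h
          · simp at h; subst h; simp
        · obtain ⟨p, q, heq, hchain⟩ := exists_split_edge hmemD' tr.chain hch
          have htr : Trail D' A (insert x S) (p ++ [x]) := by
            refine ⟨by simp, hchain, ?_, ?_⟩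
            · intro a ha
              apply tr.ha
              rw [heq, show p ++ x :: y :: q = (p ++ [x]) ++ (y :: q) by simp]
              rwa [List.head?_append_of_ne_nil (p ++ [x]) (by simp)]
            · intro b hb
              rw [List.getLast?_concat] at hb
              cases hb
              exact Finset.mem_insert_self x S
          obtain ⟨w, hwl, hwT⟩ := hT _ htr
          refine ⟨w, ?_, hwT⟩
          rw [heq]
          rcases List.mem_append.1 hwl with h | h
          · exact List.mem_append_left _ h
          · simp at h; subst h; simp
      have T2 : ∀ T, Sep D' (insert y S) B T → k ≤ T.card := by
        intro T hT
        refine hk T ?_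
        intro l tr
        by_cases hch : l.Chain' (fun a b => (a, b) ∈ D')
        · obtain ⟨z, hzl, hzS⟩ := sepS l ⟨tr.ne, hch, tr.ha, tr.hb⟩
          obtain ⟨p, z', q, rfl, hz', -⟩ := exists_first_hit ⟨z, hzl, hzS⟩
          have htr : Trail D' (insert y S) B (z' :: q) := by
            refine ⟨by simp, hch.suffix ⟨p, rfl⟩, ?_, ?_⟩
            · intro a ha
              cases ha
              exact Finset.mem_insert_of_mem hz'
            · intro b hb
              apply tr.hb
              rwa [List.getLast?_append_of_ne_nil p (by simp)]
          obtain ⟨w, hwl, hwT⟩ := hT _ htr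
          exact ⟨w, List.mem_append_right _ hwl, hwT⟩
        · obtain ⟨p, q, heq, hchain⟩ := exists_split_edge' hmemD' tr.chain hch
          have htr : Trail D' (insert y S) B (y :: q) := by
            refine ⟨by simp, hchain, ?_, ?_⟩
            · intro a ha
              cases ha
              exact Finset.mem_insert_self y S
            · intro b hb
              apply tr.hb
              rw [heq, show p ++ x :: y :: q = (p ++ [x]) ++ (y :: q) by simp]
              rwa [List.getLast?_append_of_ne_nil (p ++ [x]) (by simp)]
          obtain ⟨w, hwl, hwT⟩ := hT _ htr
          refine ⟨w, by rw [heq]; exact List.mem_append_right _ (List.mem_cons_of_mem x hwl), hwT⟩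
      -- apply the induction hypothesis on both sides
      obtain ⟨P', hP', hPdisj'⟩ := ih D' hcard' hloop' A (insert x S) k T1
      obtain ⟨R', hR2, hRdisj'⟩ := ih D' hcard' hloop' (insert y S) B k T2
      -- truncate the A-side trails at their first meeting with insert x S
      have htrunc : ∀ i, ∃ pp cc qq, P' i = pp ++ cc :: qq ∧ cc ∈ insert x S ∧
          ∀ w ∈ pp, w ∉ insert x S := by
        intro i
        have hne := (hP' i).ne
        have hlast : (P' i).getLast hne ∈ insert x S :=
          (hP' i).hb _ (List.getLast?_eq_getLast hne)
        exact exists_first_hit ⟨_, List.getLast_mem hne, hlast⟩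
      choose p c q hPeq hcmem hpavoid using htrunc
      set P : Fin k → List V := fun i => p i ++ [c i] with hP
      have hPsub : ∀ i, ∀ w ∈ P i, w ∈ P' i := by
        intro i w hw
        rw [hPeq i]
        rcases List.mem_append.1 hw with h | h
        · exact List.mem_append_left _ h
        · simp at h; subst h; simp
      have hPlast : ∀ i, (P i).getLast? = some (c i) := fun i => List.getLast?_concat
      have hPhead : ∀ i, (P i).head? = (P' i).head? := by
        intro i
        rw [hPeq i, hP]
        cases hpi : p i <;> simp [hpi]
      have hPtrail : ∀ i, Trail D' A (insert x S) (P i) := by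
        intro i
        refine ⟨by simp [hP], ?_, ?_, ?_⟩
        · have hc := (hP' i).chain
          rw [hPeq i] at hc
          exact hc.prefix ⟨q i, by simp [hP]⟩
        · intro a ha
          exact (hP' i).ha a (by rw [← hPhead i]; exact ha)
        · intro b hb
          rw [hPlast i] at hb; cases hb; exact hcmem i
      have hconly : ∀ i, ∀ w ∈ P i, w ∈ insert x S → w = c i := by
        intro i w hw hwS
        rcases List.mem_append.1 hw with h | h
        · exact absurd hwS (hpavoid i w h)
        · simpa using h
      have hPdisj : ∀ i j, i ≠ j → ∀ z ∈ P i, z ∉ P j := by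
        intro i j hij z hzi hzj
        exact hPdisj' i j hij z (hPsub i z hzi) (hPsub j z hzj)
      have hcinj : Function.Injective c := by
        intro i j hij
        by_contra hne
        exact hPdisj i j hne (c i) (by simp [hP]) (by rw [hij]; simp [hP])
      have hcsurj : ∀ t ∈ insert x S, ∃ i, c i = t := by
        intro t ht
        have himg : Finset.image c Finset.univ = insert x S := by
          apply Finset.eq_of_subset_of_card_le
          · intro t' ht'
            obtain ⟨i, _, rfl⟩ := Finset.mem_image.1 ht'
            exact hcmem i
          · rw [Finset.card_image_of_injective _ hcinj, Finset.card_univ, Fintype.card_fin, hSx]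
        rw [← himg] at ht
        obtain ⟨i, _, h⟩ := Finset.mem_image.1 ht
        exact ⟨i, h⟩
      -- truncate the B-side trails at their last meeting with insert y S
      have htruncR : ∀ i, ∃ gg dd qq, R' i = gg ++ dd :: qq ∧ dd ∈ insert y S ∧
          ∀ w ∈ qq, w ∉ insert y S := by
        intro i
        have hne := (hR2 i).ne
        have hhead : (R' i).head hne ∈ insert y S :=
          (hR2 i).ha _ (List.head?_eq_head hne)
        exact exists_last_hit ⟨_, List.head_mem hne, hhead⟩
      choose g d q' hReq hdmem hqavoid using htruncR
      set Q : Fin k → List V := fun i => d i :: q' i with hQdef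
      have hQsub : ∀ i, ∀ w ∈ Q i, w ∈ R' i := by
        intro i w hw
        rw [hReq i]; exact List.mem_append_right _ hw
      have hQhead : ∀ i, (Q i).head? = some (d i) := fun i => rfl
      have hQlast : ∀ i, (Q i).getLast? = (R' i).getLast? := by
        intro i
        rw [hReq i, List.getLast?_append_of_ne_nil _ (by simp)]
      have hQtrail : ∀ i, Trail D' (insert y S) B (Q i) := by
        intro i
        refine ⟨by simp [hQdef], ?_, ?_, ?_⟩
        · have hc := (hR2 i).chain
          rw [hReq i] at hc
          exact hc.suffix ⟨g i, rfl⟩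
        · intro a ha
          rw [hQhead i] at ha; cases ha; exact hdmem i
        · intro b hb
          exact (hR2 i).hb b (by rw [← hQlast i]; exact hb)
      have hdonly : ∀ i, ∀ w ∈ Q i, w ∈ insert y S → w = d i := by
        intro i w hw hwS
        rcases List.mem_cons.1 hw with h | h
        · exact h
        · exact absurd hwS (hqavoid i w h)
      have hQdisj : ∀ i j, i ≠ j → ∀ z ∈ Q i, z ∉ Q j := fun i j hij z hzi hzj =>
        hRdisj' i j hij z (hQsub i z hzi) (hQsub j z hzj)
      have hdinj : Function.Injective d := by
        intro i j hij
        by_contra hne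
        exact hQdisj i j hne (d i) (by simp [hQdef]) (by rw [hij]; simp [hQdef])
      have hdsurj : ∀ t ∈ insert y S, ∃ i, d i = t := by
        intro t ht
        have himg : Finset.image d Finset.univ = insert y S := by
          apply Finset.eq_of_subset_of_card_le
          · intro t' ht'
            obtain ⟨i, _, rfl⟩ := Finset.mem_image.1 ht'
            exact hdmem i
          · rw [Finset.card_image_of_injective _ hdinj, Finset.card_univ, Fintype.card_fin, hSy]
        rw [← himg] at ht
        obtain ⟨i, _, h⟩ := Finset.mem_image.1 ht
        exact ⟨i, h⟩
      -- match up the two sides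
      set τ : Fin k → V := fun i => if c i = x then y else c i with hτ
      have hτmem : ∀ i, τ i ∈ insert y S := by
        intro i
        by_cases h : c i = x
        · simp only [hτ]; rw [if_pos h]; exact Finset.mem_insert_self y S
        · simp only [hτ]; rw [if_neg h]
          rcases Finset.mem_insert.1 (hcmem i) with h' | h'
          · exact absurd h' h
          · exact Finset.mem_insert_of_mem h'
      have hτinj : Function.Injective τ := by
        intro i j hij
        simp only [hτ] at hij
        by_cases hi : c i = x <;> by_cases hj : c j = x
        · exact hcinj (by rw [hi, hj])
        · rw [if_pos hi, if_neg hj] at hij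
          rcases Finset.mem_insert.1 (hcmem j) with h' | h'
          · exact absurd h' hj
          · exact absurd (hij ▸ h') hyS
        · rw [if_neg hi, if_pos hj] at hij
          rcases Finset.mem_insert.1 (hcmem i) with h' | h'
          · exact absurd h' hi
          · exact absurd (hij ▸ h') hyS
        · rw [if_neg hi, if_neg hj] at hij
          exact hcinj hij
      have hjex : ∀ i, ∃ j, d j = τ i := fun i => hdsurj _ (hτmem i)
      choose jj hjj using hjex
      have hjjinj : ∀ i i', i ≠ i' → jj i ≠ jj i' := by
        intro i i' hne heq
        exact hne (hτinj (by rw [← hjj i, ← hjj i', heq]))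
      -- the key claim: common vertices of the two path systems lie in S
      have hKEY : ∀ i i', ∀ z, z ∈ P i → z ∈ Q i' → z ∈ S := by
        intro i i' z hzP hzQ
        by_contra hzS
        obtain ⟨α, β, hαβ⟩ := List.append_of_mem hzP
        obtain ⟨γ, δ, hγδ⟩ := List.append_of_mem hzQ
        have hα : ∀ w ∈ α, w ∉ insert x S := by
          intro w hw
          have hpre : α <+: p i := by
            have h1 : α <+: P i := ⟨z :: β, hαβ.symm⟩
            have h2 : p i <+: P i := ⟨[c i], rfl⟩
            refine List.prefix_of_prefix_length_le h1 h2 ?_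
            have hαβ2 : p i ++ [c i] = α ++ z :: β := hαβ
            have hlen := congrArg List.length hαβ2
            simp only [List.length_append, List.length_cons, List.length_nil] at hlen
            omega
          exact hpavoid i w (hpre.subset hw)
        have hδ : ∀ w ∈ δ, w ∉ insert y S := by
          intro w hw
          apply hqavoid i' w
          rcases γ with _ | ⟨g0, γ'⟩
          · have hγδ2 : d i' :: q' i' = z :: δ := hγδ
            injection hγδ2 with h1 h2
            rw [h2]
            exact hw
          · have hγδ2 : d i' :: q' i' = g0 :: (γ' ++ z :: δ) := hγδ
            injection hγδ2 with h1 h2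
            rw [h2]
            exact List.mem_append_right _ (List.mem_cons_of_mem _ hw)
        have hcP : List.Chain' (fun a b => (a, b) ∈ D') (α ++ z :: β) := by
          rw [← hαβ]; exact (hPtrail i).chain
        have hcQ : List.Chain' (fun a b => (a, b) ∈ D') (γ ++ z :: δ) := by
          rw [← hγδ]; exact (hQtrail i').chain
        have hcQz : List.Chain' (fun a b => (a, b) ∈ D') (z :: δ) := hcQ.suffix ⟨γ, rfl⟩
        have hLtrail : Trail D' A B (α ++ z :: δ) := by
          refine ⟨by simp, ?_, ?_, ?_⟩
          · rw [show α ++ z :: δ = (α ++ [z]) ++ δ by simp]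
            refine List.IsChain.append (hcP.prefix ⟨β, by simp⟩) hcQz.tail ?_
            intro a ha b hb
            rw [List.getLast?_concat] at ha; cases ha
            exact (List.isChain_cons.1 hcQz).1 b hb
          · intro a ha
            apply (hPtrail i).ha
            rw [hαβ]
            rcases α with _ | ⟨a0, α'⟩
            · simpa using ha
            · simpa using ha
          · intro b hb
            apply (hQtrail i').hb
            rw [hγδ]
            by_cases hδnil : δ = []
            · subst hδnil
              rw [List.getLast?_concat] at hb
              rw [List.getLast?_concat]
              exact hb
            · rw [show α ++ z :: δ = (α ++ [z]) ++ δ by simp,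
                List.getLast?_append_of_ne_nil _ hδnil] at hb
              rw [show γ ++ z :: δ = (γ ++ [z]) ++ δ by simp,
                List.getLast?_append_of_ne_nil _ hδnil]
              exact hb
        obtain ⟨w, hwl, hwS⟩ := sepS _ hLtrail
        rcases List.mem_append.1 hwl with h | h
        · exact hα w h (Finset.mem_insert_of_mem hwS)
        · rcases List.mem_cons.1 h with rfl | h
          · exact hzS hwS
          · exact hδ w h (Finset.mem_insert_of_mem hwS)
      -- assemble the final system of disjoint trails in D
      refine ⟨fun i => P i ++ (if c i = x then Q (jj i) else q' (jj i)), ?_, ?_⟩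
      · intro i
        show Trail D A B (P i ++ if c i = x then Q (jj i) else q' (jj i))
        by_cases hxi : c i = x
        · rw [if_pos hxi]
          refine ⟨fun h => (hPtrail i).ne (List.append_eq_nil_iff.1 h).1, ?_, ?_, ?_⟩
          · refine List.IsChain.append ((hPtrail i).chain.imp (fun _ _ h => hDD h))
              ((hQtrail (jj i)).chain.imp (fun _ _ h => hDD h)) ?_
            intro a ha b hb
            rw [hPlast i] at ha; cases ha
            rw [hQhead (jj i)] at hb; cases hb
            have hdy : d (jj i) = y := by rw [hjj i]; simp only [hτ]; rw [if_pos hxi]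
            rw [hxi, hdy]
            exact he
          · intro a ha
            apply (hPtrail i).ha
            rwa [List.head?_append_of_ne_nil _ (hPtrail i).ne] at ha
          · intro b hb
            apply (hQtrail (jj i)).hb
            rwa [List.getLast?_append_of_ne_nil _ (hQtrail (jj i)).ne] at hb
        · rw [if_neg hxi]
          have hdji : d (jj i) = c i := by rw [hjj i]; simp only [hτ]; rw [if_neg hxi]
          refine ⟨fun h => (hPtrail i).ne (List.append_eq_nil_iff.1 h).1, ?_, ?_, ?_⟩
          · refine List.IsChain.append ((hPtrail i).chain.imp (fun _ _ h => hDD h))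
              (((hQtrail (jj i)).chain.tail).imp (fun _ _ h => hDD h)) ?_
            intro a ha b hb
            rw [hPlast i] at ha; cases ha
            have hc2 : List.Chain' (fun a b => (a, b) ∈ D') (d (jj i) :: q' (jj i)) :=
              (hQtrail (jj i)).chain
            have hrel := (List.isChain_cons.1 hc2).1 b hb
            rw [← hdji]
            exact hDD hrel
          · intro a ha
            apply (hPtrail i).ha
            rwa [List.head?_append_of_ne_nil _ (hPtrail i).ne] at ha
          · intro b hb
            by_cases hq : q' (jj i) = []
            · rw [hq, List.append_nil, hPlast i] at hb
              cases hb
              have hbB := (hQtrail (jj i)).hb (d (jj i)) (by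
                rw [show Q (jj i) = d (jj i) :: q' (jj i) from rfl, hq]; rfl)
              rwa [hdji] at hbB
            · rw [List.getLast?_append_of_ne_nil _ hq] at hb
              apply (hQtrail (jj i)).hb
              rw [show Q (jj i) = [d (jj i)] ++ q' (jj i) by simp [hQdef],
                List.getLast?_append_of_ne_nil _ hq]
              exact hb
      · intro i i' hne z hzi hzj
        have hzi' : z ∈ P i ++ (if c i = x then Q (jj i) else q' (jj i)) := hzi
        have hzj' : z ∈ P i' ++ (if c i' = x then Q (jj i') else q' (jj i')) := hzj
        have hmem1 : z ∈ P i ∨ z ∈ Q (jj i) := by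
          rcases List.mem_append.1 hzi' with h | h
          · exact Or.inl h
          · right
            by_cases hxi : c i = x
            · rwa [if_pos hxi] at h
            · rw [if_neg hxi] at h
              exact List.mem_cons_of_mem _ h
        have hmem2 : z ∈ P i' ∨ z ∈ Q (jj i') := by
          rcases List.mem_append.1 hzj' with h | h
          · exact Or.inl h
          · right
            by_cases hxi : c i' = x
            · rwa [if_pos hxi] at h
            · rw [if_neg hxi] at h
              exact List.mem_cons_of_mem _ h
        rcases hmem1 with h1 | h1 <;> rcases hmem2 with h2 | h2
        · exact hPdisj i i' hne z h1 h2
        · have hzS : z ∈ S := hKEY i (jj i') z h1 h2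
          have hzc : z = c i := hconly i z h1 (Finset.mem_insert_of_mem hzS)
          have hzd : z = d (jj i') := hdonly (jj i') z h2 (Finset.mem_insert_of_mem hzS)
          have hcx : c i ≠ x := fun h => hxS (h ▸ hzc ▸ hzS)
          have hττ : τ i = τ i' := by
            have h3 : τ i = c i := by simp only [hτ]; rw [if_neg hcx]
            rw [h3, ← hjj i', ← hzd, ← hzc]
          exact hne (hτinj hττ)
        · have hzS : z ∈ S := hKEY i' (jj i) z h2 h1
          have hzc : z = c i' := hconly i' z h2 (Finset.mem_insert_of_mem hzS)
          have hzd : z = d (jj i) := hdonly (jj i) z h1 (Finset.mem_insert_of_mem hzS)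
          have hcx : c i' ≠ x := fun h => hxS (h ▸ hzc ▸ hzS)
          have hττ : τ i' = τ i := by
            have h3 : τ i' = c i' := by simp only [hτ]; rw [if_neg hcx]
            rw [h3, ← hjj i, ← hzd, ← hzc]
          exact hne (hτinj hττ).symm
        · exact hQdisj (jj i) (jj i') (hjjinj i i' hne) z h1 h2
    · push_neg at hS
      obtain ⟨W, hW, hdisj⟩ := ih D' hcard' hloop' A B k (fun S h => hS S h)
      exact ⟨W, fun i => trail_sub hDD (hW i), hdisj⟩



open List SimpleGraph

variable {V : Type*} [DecidableEq V]

/-- Build a walk from a list that is a chain of adjacent vertices. -/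
def walkAux (G : SimpleGraph V) : (l : List V) → (a b : V) → List.Chain G.Adj a l →
    (a :: l).getLast (List.cons_ne_nil a l) = b → G.Walk a b
  | [], a, b, _, hb => (Walk.nil : G.Walk a a).copy rfl hb
  | c :: t, a, b, h, hb =>
    Walk.cons (List.chain_cons.1 h).1
      (walkAux G t c b (List.chain_cons.1 h).2 (by rwa [List.getLast_cons (List.cons_ne_nil c t)] at hb))

@[simp] lemma walkAux_support (G : SimpleGraph V) :
    ∀ (l : List V) (a b : V) (h : List.Chain G.Adj a l)
      (hb : (a :: l).getLast (List.cons_ne_nil a l) = b),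
      (walkAux G l a b h hb).support = a :: l
  | [], a, b, _, hb => by
    subst hb
    simp [walkAux]
  | c :: t, a, b, h, hb => by
    simp [walkAux]; exact walkAux_support G t c b _ _

@[simp] lemma walkAux_length (G : SimpleGraph V) :
    ∀ (l : List V) (a b : V) (h : List.Chain G.Adj a l)
      (hb : (a :: l).getLast (List.cons_ne_nil a l) = b),
      (walkAux G l a b h hb).length = l.length
  | [], a, b, _, hb => by
    subst hb
    simp [walkAux]
  | c :: t, a, b, h, hb => by
    simp [walkAux]; exact walkAux_length G t c b _ _

/-- Every list is a chain of its own two-element infixes. -/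
lemma pairs_infix : ∀ (M : List V), M.Chain' (fun a b => [a, b] <:+: M)
  | [] => List.isChain_nil
  | [a] => List.isChain_singleton a
  | a :: b :: t => by
    refine List.isChain_cons.2 ⟨?_, ?_⟩
    · intro y hy
      cases hy
      exact ⟨[], t, rfl⟩
    · exact (pairs_infix (b :: t)).imp (fun c d h => h.trans ⟨[a], [], by simp⟩)

lemma chain_succ_getLast {f : V → ℕ} : ∀ (l : List V) (a : V),
    List.Chain (fun p q => f q = f p + 1) a l →
    f ((a :: l).getLast (List.cons_ne_nil a l)) = f a + l.length := by
  intro l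
  induction l with
  | nil => intro a _; simp
  | cons b t ih =>
    intro a h
    rw [List.getLast_cons (List.cons_ne_nil b t)]
    have h1 := (List.chain_cons.1 h).1
    have h2 := ih b (List.chain_cons.1 h).2
    rw [h2, h1]
    simp
    omega

section App

variable {V : Type*} [Fintype V] [DecidableEq V]

variable (G : SimpleGraph V) (u v : V) (s : ℕ)

open Classical in
/-- The digraph of edges lying on some short `u`-`v` path. -/
noncomputable def Dg : Finset (V × V) :=
  Finset.univ.filter (fun e => ∃ w : G.Walk u v, (w.IsPath ∧ w.length ≤ s) ∧
    [e.1, e.2] <:+: w.support)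

lemma mem_Dg {x y : V} : (x, y) ∈ Dg G u v s ↔
    ∃ w : G.Walk u v, (w.IsPath ∧ w.length ≤ s) ∧ [x, y] <:+: w.support := by
  classical
  simp [Dg]

/-- The "layer" of a vertex: its position on any short path through it. -/
noncomputable def lam (x : V) : ℕ :=
  sInf {n | ∃ (w : G.Walk u v) (α β : List V), (w.IsPath ∧ w.length ≤ s) ∧
    w.support = α ++ x :: β ∧ α.length = n}

open Classical in
noncomputable def Ag : Finset V := Finset.univ.filter (fun z => (u, z) ∈ Dg G u v s)

open Classical in
noncomputable def Bg : Finset V := Finset.univ.filter (fun z => (z, v) ∈ Dg G u v s)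

lemma mem_Ag {z : V} : z ∈ Ag G u v s ↔ (u, z) ∈ Dg G u v s := by classical simp [Ag]

lemma mem_Bg {z : V} : z ∈ Bg G u v s ↔ (z, v) ∈ Dg G u v s := by classical simp [Bg]

variable {G u v s}

lemma short_len (hmin : ∀ w : G.Walk u v, s ≤ w.length) {w : G.Walk u v}
    (hw : w.IsPath ∧ w.length ≤ s) : w.length = s :=
  le_antisymm hw.2 (hmin w)

lemma combine (hmin : ∀ w : G.Walk u v, s ≤ w.length) {w1 w2 : G.Walk u v} {x : V}
    {α1 β1 α2 β2 : List V}
    (h1 : w1.IsPath ∧ w1.length ≤ s) (h2 : w2.IsPath ∧ w2.length ≤ s)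
    (e1 : w1.support = α1 ++ x :: β1) (e2 : w2.support = α2 ++ x :: β2) :
    α2.length ≤ α1.length := by
  have c1 := w1.isChain_adj_support
  have c2 := w2.isChain_adj_support
  rw [e1] at c1
  rw [e2] at c2
  have c2x : (x :: β2).Chain' G.Adj := c2.suffix ⟨α2, rfl⟩
  have hchain : (α1 ++ x :: β2).Chain' G.Adj := by
    rw [show α1 ++ x :: β2 = (α1 ++ [x]) ++ β2 by simp]
    refine (c1.prefix ⟨β1, by simp⟩).append c2x.tail ?_
    intro p hp q hq
    rw [List.getLast?_concat] at hp; cases hp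
    exact (List.isChain_cons.1 c2x).1 q hq
  -- identify the head of the combined list with u
  have hhead : (α1 ++ x :: β1).head? = some u := by
    rw [← e1]
    conv_lhs => rw [w1.support_eq_cons]
    rfl
  have hL : ∃ t, α1 ++ x :: β2 = u :: t ∧ t.length = α1.length + β2.length := by
    rcases α1 with _ | ⟨a0, t1⟩
    · rw [List.nil_append] at hhead ⊢
      rw [List.head?_cons] at hhead
      cases hhead
      exact ⟨β2, rfl, by simp⟩
    · rw [List.cons_append, List.head?_cons] at hhead
      cases hhead
      exact ⟨t1 ++ x :: β2, rfl, by simp only [List.length_append, List.length_cons]; omega⟩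
  obtain ⟨t, hLt, hlen⟩ := hL
  -- identify the last of the combined list with v
  have g2q : (α2 ++ x :: β2).getLast? = some v := by
    rw [← e2, List.getLast?_eq_getLast w2.support_ne_nil, w2.getLast_support]
  have g1q : (α1 ++ x :: β2).getLast? = some v := by
    rcases hβ : β2 with _ | ⟨b0, β2'⟩
    · subst hβ
      rw [List.getLast?_concat] at g2q
      rw [List.getLast?_concat]
      exact g2q
    · subst hβ
      rw [show α2 ++ x :: b0 :: β2' = (α2 ++ [x]) ++ (b0 :: β2') by simp,
        List.getLast?_append_of_ne_nil _ (by simp)] at g2q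
      rw [show α1 ++ x :: b0 :: β2' = (α1 ++ [x]) ++ (b0 :: β2') by simp,
        List.getLast?_append_of_ne_nil _ (by simp)]
      exact g2q
  have glast : ((u :: t).getLast (List.cons_ne_nil u t)) = v := by
    have h1 : (u :: t).getLast? = some v := by rw [← hLt]; exact g1q
    rw [List.getLast?_eq_getLast (List.cons_ne_nil u t)] at h1
    injection h1
  have hchainc : List.Chain G.Adj u t := by rw [hLt] at hchain; exact hchain
  have hlenW := hmin (walkAux G t u v hchainc glast)
  rw [walkAux_length] at hlenW
  have hw2len : w2.length = s := short_len hmin h2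
  have hsup2 : w2.support.length = s + 1 := by rw [SimpleGraph.Walk.length_support, hw2len]
  rw [e2] at hsup2
  simp only [List.length_append, List.length_cons] at hsup2
  omega

lemma lam_spec (hmin : ∀ w : G.Walk u v, s ≤ w.length) {w : G.Walk u v} {x : V}
    {α β : List V} (hw : w.IsPath ∧ w.length ≤ s) (e : w.support = α ++ x :: β) :
    lam G u v s x = α.length := by
  refine le_antisymm (Nat.sInf_le ⟨w, α, β, hw, e, rfl⟩) ?_
  refine le_csInf ⟨α.length, w, α, β, hw, e, rfl⟩ ?_
  rintro n ⟨w2, α2, β2, h2, e2, rfl⟩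
  exact combine hmin h2 hw e2 e

lemma lam_u (hmin : ∀ w : G.Walk u v, s ≤ w.length)
    (hreach : ∃ w : G.Walk u v, w.IsPath ∧ w.length = s) : lam G u v s u = 0 := by
  obtain ⟨w, hp, hl⟩ := hreach
  exact lam_spec (α := []) (β := w.support.tail) hmin ⟨hp, le_of_eq hl⟩
    (by rw [List.nil_append]; exact w.support_eq_cons)

lemma lam_v (hmin : ∀ w : G.Walk u v, s ≤ w.length)
    (hreach : ∃ w : G.Walk u v, w.IsPath ∧ w.length = s) : lam G u v s v = s := by
  obtain ⟨w, hp, hl⟩ := hreach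
  have hne : w.support ≠ [] := w.support_ne_nil
  have e : w.support = w.support.dropLast ++ v :: [] := by
    conv_lhs => rw [← List.dropLast_append_getLast hne]
    rw [w.getLast_support]
  have := lam_spec hmin ⟨hp, le_of_eq hl⟩ e
  rw [this, List.length_dropLast, SimpleGraph.Walk.length_support, hl]
  simp

lemma Dg_lam (hmin : ∀ w : G.Walk u v, s ≤ w.length) {x y : V}
    (h : (x, y) ∈ Dg G u v s) : lam G u v s y = lam G u v s x + 1 := by
  rw [mem_Dg] at h
  obtain ⟨w, hw, α, β, heq⟩ := h
  have e1 : w.support = α ++ x :: y :: β := by rw [← heq]; simp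
  have e2 : w.support = (α ++ [x]) ++ y :: β := by rw [e1]; simp
  rw [lam_spec hmin hw e1, lam_spec hmin hw e2]
  simp

lemma Dg_adj {x y : V} (h : (x, y) ∈ Dg G u v s) : G.Adj x y := by
  rw [mem_Dg] at h
  obtain ⟨w, _, hinf⟩ := h
  exact List.isChain_pair.1 (w.isChain_adj_support.infix hinf)

lemma Dg_irrefl (hmin : ∀ w : G.Walk u v, s ≤ w.length) :
    ∀ x : V, (x, x) ∉ Dg G u v s := fun x h => by
  have := Dg_lam hmin h; omega

/-- Bridge 2: a trail in the layered digraph yields a short path. -/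
lemma trail_to_short (hmin : ∀ w : G.Walk u v, s ≤ w.length)
    (hreach : ∃ w : G.Walk u v, w.IsPath ∧ w.length = s) {M : List V}
    (tr : MengerAux.Trail (Dg G u v s) (Ag G u v s) (Bg G u v s) M) :
    ∃ w : G.Walk u v, (w.IsPath ∧ w.length ≤ s) ∧ w.support = u :: (M ++ [v]) ∧
      u ∉ M ∧ v ∉ M := by
  have hM : M ≠ [] := tr.ne
  have hhA : (u, M.head hM) ∈ Dg G u v s :=
    (mem_Ag G u v s).1 (tr.ha _ (List.head?_eq_head hM))
  have hlB : (M.getLast hM, v) ∈ Dg G u v s :=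
    (mem_Bg G u v s).1 (tr.hb _ (List.getLast?_eq_getLast hM))
  set L : List V := u :: (M ++ [v]) with hLdef
  have c1 : (M ++ [v]).Chain' (fun a b => (a, b) ∈ Dg G u v s) := by
    refine tr.chain.append (List.isChain_singleton v) ?_
    intro p hp q hq
    cases hq
    rw [List.getLast?_eq_getLast hM] at hp; cases hp
    exact hlB
  have c2 : L.Chain' (fun a b => (a, b) ∈ Dg G u v s) := by
    refine List.isChain_cons.2 ⟨?_, c1⟩
    intro q hq
    rw [List.head?_append_of_ne_nil _ hM, List.head?_eq_head hM] at hq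
    cases hq
    exact hhA
  haveI : IsTrans V (fun a b : V => lam G u v s a < lam G u v s b) :=
    ⟨fun _ _ _ h1 h2 => lt_trans h1 h2⟩
  have clam : L.Chain' (fun a b => lam G u v s a < lam G u v s b) :=
    c2.imp (fun a b h => by rw [Dg_lam hmin h]; omega)
  have pw : L.Pairwise (fun a b => lam G u v s a < lam G u v s b) :=
    List.isChain_iff_pairwise.1 clam
  have nodupL : L.Nodup := pw.imp (fun h e => absurd (e ▸ h) (lt_irrefl _))
  have huM : u ∉ M := by
    intro hu
    have := (List.pairwise_cons.1 pw).1 u (List.mem_append_left _ hu)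
    omega
  have hvM : v ∉ M := by
    intro hv
    have hpw2 := (List.pairwise_cons.1 pw).2
    have := (List.pairwise_append.1 hpw2).2.2 v hv v (by simp)
    omega
  -- length of M
  have csucc : List.Chain (fun p q => lam G u v s q = lam G u v s p + 1) u (M ++ [v]) :=
    (c2.imp (fun a b h => Dg_lam hmin h) : L.Chain' _)
  have hlast : (L.getLast (List.cons_ne_nil _ _)) = v := by
    have h1 : L.getLast? = some v := by
      rw [hLdef, show u :: (M ++ [v]) = (u :: M) ++ [v] by simp, List.getLast?_concat]
    rw [List.getLast?_eq_getLast (List.cons_ne_nil _ _)] at h1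
    injection h1
  have hgl := chain_succ_getLast (M ++ [v]) u csucc
  rw [show (u :: (M ++ [v])).getLast (List.cons_ne_nil _ _) = v from hlast] at hgl
  rw [lam_u hmin hreach, lam_v hmin hreach] at hgl
  simp only [List.length_append, List.length_cons, List.length_nil] at hgl
  -- build the walk
  have cadj : List.Chain G.Adj u (M ++ [v]) :=
    (c2.imp (fun a b h => Dg_adj h) : L.Chain' G.Adj)
  refine ⟨walkAux G (M ++ [v]) u v cadj hlast, ⟨?_, ?_⟩, ?_, huM, hvM⟩
  · exact SimpleGraph.Walk.IsPath.mk' (by rw [walkAux_support]; exact nodupL)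
  · rw [walkAux_length]
    simp only [List.length_append, List.length_cons, List.length_nil]
    omega
  · rw [walkAux_support]

/-- Bridge 1: a short path yields a trail in the layered digraph. -/
lemma short_to_trail (hmin : ∀ w : G.Walk u v, s ≤ w.length) (hs2 : 2 ≤ s)
    {w : G.Walk u v} (hw : w.IsPath ∧ w.length ≤ s) :
    ∃ M, MengerAux.Trail (Dg G u v s) (Ag G u v s) (Bg G u v s) M ∧
      ∀ z ∈ M, z ∈ w.support := by
  have hlen : w.length = s := short_len hmin hw
  have hsuplen : w.support.length = s + 1 := by
    rw [SimpleGraph.Walk.length_support, hlen]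
  have htne : w.support.tail ≠ [] := by
    intro h
    have := congrArg List.length (w.support_eq_cons)
    rw [h] at this
    simp [hsuplen] at this
    omega
  set M : List V := w.support.tail.dropLast with hMdef
  have htail : w.support.tail = M ++ [w.support.tail.getLast htne] :=
    (List.dropLast_append_getLast htne).symm
  have hgl : w.support.tail.getLast htne = v := by
    have h1 : w.support.getLast? = some v := by
      rw [List.getLast?_eq_getLast w.support_ne_nil, w.getLast_support]
    have h2 : (u :: w.support.tail).getLast? = some v := by
      conv_lhs => rw [← w.support_eq_cons]
      exact h1
    rw [show (u :: w.support.tail) = [u] ++ w.support.tail by simp,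
      List.getLast?_append_of_ne_nil _ htne] at h2
    rw [List.getLast?_eq_getLast htne] at h2
    injection h2
  have hsup : w.support = u :: (M ++ [v]) := by
    conv_lhs => rw [w.support_eq_cons]
    rw [htail, hgl]
  have hMne : M ≠ [] := by
    intro h
    have := congrArg List.length hsup
    rw [h, hsuplen] at this
    simp at this
    omega
  have hMinf : M <:+: w.support := ⟨[u], [v], by rw [hsup]; simp⟩
  refine ⟨M, ⟨hMne, ?_, ?_, ?_⟩, fun z hz => by
    rw [hsup]; exact List.mem_cons_of_mem _ (List.mem_append_left _ hz)⟩
  · refine (pairs_infix M).imp ?_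
    intro a b hab
    rw [mem_Dg]
    exact ⟨w, hw, hab.trans hMinf⟩
  · intro a ha
    rw [List.head?_eq_head hMne] at ha
    cases ha
    rw [mem_Ag, mem_Dg]
    refine ⟨w, hw, ⟨[], M.tail ++ [v], ?_⟩⟩
    rw [hsup]
    conv_rhs => rw [← List.cons_head_tail hMne]
    simp
    rw [← List.cons_append, List.cons_head_tail]
  · intro b hb
    rw [List.getLast?_eq_getLast hMne] at hb
    cases hb
    rw [mem_Bg, mem_Dg]
    refine ⟨w, hw, ⟨u :: M.dropLast, [], ?_⟩⟩
    rw [hsup]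
    conv_rhs => rw [← List.dropLast_append_getLast hMne]
    simp

end App

end MengerAux


/-- Two walks with the same endpoints are internally vertex-disjoint if they share no
vertices besides the endpoints. -/
def InternallyDisjoint {V : Type*} {G : SimpleGraph V} {x y : V}
    (p q : G.Walk x y) : Prop :=
  ∀ z ∈ p.support, z ∈ q.support → z = x ∨ z = y

open MengerAux

/-- `κ_s = μ_s` when `s` is the hop-distance. Let `u, v` be
non-adjacent and let `s` be the minimum number of edges of a `u`-`v` path. Then the
minimum number of vertices (excluding `u,v`) whose removal destroys all `u`-`v` paths
with at most `s` edges equals the maximum number of internally vertex-disjoint `u`-`v`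
paths with at most `s` edges each. -/
theorem kappa_eq_mu_at_hop_distance {V : Type*} [Fintype V] [DecidableEq V]
    (G : SimpleGraph V) (u v : V) (huv : u ≠ v) (hna : ¬G.Adj u v) (s : ℕ)
    (hreach : ∃ w : G.Walk u v, w.IsPath ∧ w.length = s)
    (hmin : ∀ w : G.Walk u v, s ≤ w.length) :
    sInf {n : ℕ | ∃ S : Finset V, S.card = n ∧ u ∉ S ∧ v ∉ S ∧
        ∀ w : G.Walk u v, w.IsPath → w.length ≤ s → ∃ x ∈ w.support, x ∈ S}
      = sSup {m : ℕ | ∃ Q : Fin m → G.Walk u v,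
          (∀ i, (Q i).IsPath ∧ (Q i).length ≤ s) ∧
          ∀ i j, i ≠ j → InternallyDisjoint (Q i) (Q j)} := by
  classical
  have hs2 : 2 ≤ s := by
    obtain ⟨w0, hw0p, hw0l⟩ := hreach
    have hs0 : s ≠ 0 := fun h =>
      huv (SimpleGraph.Walk.eq_of_length_eq_zero (by rw [hw0l, h]))
    have hs1 : s ≠ 1 := fun h =>
      hna (SimpleGraph.Walk.adj_of_length_eq_one (by rw [hw0l, h]))
    omega
  set K : Set ℕ := {n : ℕ | ∃ S : Finset V, S.card = n ∧ u ∉ S ∧ v ∉ S ∧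
      ∀ w : G.Walk u v, w.IsPath → w.length ≤ s → ∃ x ∈ w.support, x ∈ S} with hK
  set Mu : Set ℕ := {m : ℕ | ∃ Q : Fin m → G.Walk u v,
      (∀ i, (Q i).IsPath ∧ (Q i).length ≤ s) ∧
      ∀ i j, i ≠ j → InternallyDisjoint (Q i) (Q j)} with hMu
  -- an internal vertex of any short path
  have hints : ∀ w : G.Walk u v, w.IsPath → w.length ≤ s →
      ∃ z, z ∈ w.support ∧ z ≠ u ∧ z ≠ v := by
    intro w hp hl
    obtain ⟨M, trM, hMsub⟩ := short_to_trail hmin hs2 ⟨hp, hl⟩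
    obtain ⟨w', -, -, huM, hvM⟩ := trail_to_short hmin hreach trM
    exact ⟨M.head trM.ne, hMsub _ (List.head_mem trM.ne),
      fun h => huM (h ▸ List.head_mem trM.ne),
      fun h => hvM (h ▸ List.head_mem trM.ne)⟩
  have hKne : K.Nonempty := by
    refine ⟨(Finset.univ \ {u, v}).card, Finset.univ \ {u, v}, rfl, by simp, by simp, ?_⟩
    intro w hp hl
    obtain ⟨z, hzsup, hzu, hzv⟩ := hints w hp hl
    exact ⟨z, hzsup, by simp [hzu, hzv]⟩
  have hMu0 : (0 : ℕ) ∈ Mu := ⟨Fin.elim0, fun i => i.elim0, fun i => i.elim0⟩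
  have hMubdd : BddAbove Mu := by
    refine ⟨Fintype.card V, fun m hm => ?_⟩
    obtain ⟨Q, hQ, hdisj⟩ := hm
    have hpick : ∀ i : Fin m, ∃ z, z ∈ (Q i).support ∧ z ≠ u ∧ z ≠ v :=
      fun i => hints _ (hQ i).1 (hQ i).2
    choose z hz hzu hzv using hpick
    have hinj : Function.Injective z := by
      intro i j hij
      by_contra hne
      rcases hdisj i j hne (z i) (hz i) (by rw [hij]; exact hz j) with h | h
      · exact hzu i h
      · exact hzv i h
    calc m = Fintype.card (Fin m) := (Fintype.card_fin m).symm
      _ ≤ Fintype.card V := Fintype.card_le_of_injective z hinj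
  refine le_antisymm ?_ ?_
  · -- the hard direction, via Menger's theorem for the layered digraph
    have hyp : ∀ S', Sep (Dg G u v s) (Ag G u v s) (Bg G u v s) S' → sInf K ≤ S'.card := by
      intro S' hsep
      have hTK : (S' \ {u, v}).card ∈ K := by
        refine ⟨S' \ {u, v}, rfl, by simp, by simp, ?_⟩
        intro w hp hl
        obtain ⟨M, trM, hMsub⟩ := short_to_trail hmin hs2 ⟨hp, hl⟩
        obtain ⟨w', -, -, huM, hvM⟩ := trail_to_short hmin hreach trM
        obtain ⟨zz, hzM, hzS⟩ := hsep M trM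
        refine ⟨zz, hMsub _ hzM, ?_⟩
        simp only [Finset.mem_sdiff, Finset.mem_insert, Finset.mem_singleton]
        refine ⟨hzS, ?_⟩
        rintro (rfl | rfl)
        · exact huM hzM
        · exact hvM hzM
      exact (Nat.sInf_le hTK).trans (Finset.card_le_card Finset.sdiff_subset)
    obtain ⟨W, hW, hWdisj⟩ := menger (Dg G u v s).card (Dg G u v s) le_rfl
      (Dg_irrefl hmin) (Ag G u v s) (Bg G u v s) (sInf K) hyp
    have hQex : ∀ i : Fin (sInf K), ∃ w : G.Walk u v,
        (w.IsPath ∧ w.length ≤ s) ∧ w.support = u :: (W i ++ [v]) ∧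
        u ∉ W i ∧ v ∉ W i := fun i => trail_to_short hmin hreach (hW i)
    choose Q hQshort hQsup hQu hQv using hQex
    have hkMu : sInf K ∈ Mu := by
      refine ⟨Q, fun i => hQshort i, ?_⟩
      intro i j hij z hzi hzj
      rw [hQsup i] at hzi
      rw [hQsup j] at hzj
      simp only [List.mem_cons, List.mem_append, List.mem_singleton, List.not_mem_nil, or_false] at hzi hzj
      rcases hzi with rfl | hzi | rfl
      · exact Or.inl rfl
      · rcases hzj with rfl | hzj | rfl
        · exact Or.inl rfl
        · exact absurd hzj (hWdisj i j hij z hzi)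
        · exact Or.inr rfl
      · exact Or.inr rfl
    exact le_csSup hMubdd hkMu
  · refine csSup_le ⟨0, hMu0⟩ ?_
    rintro m ⟨Q, hQ, hdisj⟩
    obtain ⟨S, hScard, huS, hvS, hhit⟩ := Nat.sInf_mem hKne
    rw [← hScard]
    have hpick : ∀ i : Fin m, ∃ z, z ∈ (Q i).support ∧ z ∈ S := by
      intro i
      obtain ⟨z, h1, h2⟩ := hhit (Q i) (hQ i).1 (hQ i).2
      exact ⟨z, h1, h2⟩
    choose z hzsup hzS using hpick
    have hinj : Function.Injective fun i => (⟨z i, hzS i⟩ : {a // a ∈ S}) := by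
      intro i j hij
      simp only [Subtype.mk.injEq] at hij
      by_contra hne
      rcases hdisj i j hne (z i) (hzsup i) (by rw [hij]; exact hzsup j) with h | h
      · exact huS (h ▸ hzS i)
      · exact hvS (h ▸ hzS i)
    calc m = Fintype.card (Fin m) := (Fintype.card_fin m).symm
      _ ≤ Fintype.card {a // a ∈ S} := Fintype.card_le_of_injective _ hinj
      _ = S.card := Fintype.card_coe S
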